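/- Let 0 < λ ≤ Λ, let 1 ≤ p ≤ n be an integer, let b ≥ 0, c > 0, δ > 0, and let Ω ⊆ B_δ = {|x| < δ} be a bounded domain of ℝⁿ. If u ∈ USC(Ω) is a viscosity subsolution of P⁺_{λ,Λ|p}(D²u) + b|Du| − c·u = f(x) in Ω with f : Ω → ℝ continuous, then for every ε > 0, sup_Ω u ≤ limsup_{y→∂Ω} u⁺(y) + C·‖f⁻‖_∞ with C = (δ² + (2/c)(λp − bδ)⁻ + ε)/(2(λp − bδ)⁺ + cε), where t⁺ = max(t,0) and t⁻ = max(−t,0). -/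

import Mathlib

open MeasureTheory Metric Filter
open scoped ENNReal

noncomputable section

/-- Matrix (in the standard basis) of the orthogonal projection of `ℝⁿ` onto a subspace `W`. -/
noncomputable def projMatrix {n : ℕ} (W : Submodule ℝ (EuclideanSpace ℝ (Fin n))) :
    Matrix (Fin n) (Fin n) ℝ :=
  LinearMap.toMatrix (EuclideanSpace.basisFun (Fin n) ℝ).toBasis
    (EuclideanSpace.basisFun (Fin n) ℝ).toBasis
    (W.subtype ∘ₗ W.orthogonalProjectionOnto.toLinearMap)

/-- `X_W = P_W X P_W`, the compression of `X` to the subspace `W`. -/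
noncomputable def restrictW {n : ℕ} (W : Submodule ℝ (EuclideanSpace ℝ (Fin n)))
    (X : Matrix (Fin n) (Fin n) ℝ) : Matrix (Fin n) (Fin n) ℝ :=
  projMatrix W * X * projMatrix W

/-- `Tr(A⁺)`, i.e. the sum of the positive parts of the eigenvalues of a symmetric matrix `A`,
where `A = A⁺ - A⁻` is the unique decomposition with `A⁺, A⁻` positive semidefinite and
`A⁺ A⁻ = 0`. -/
noncomputable def posTrace {n : ℕ} (A : Matrix (Fin n) (Fin n) ℝ) : ℝ :=
  if h : A.IsHermitian then ∑ i, max (h.eigenvalues i) 0 else 0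

/-- `Tr(A⁻)`, the sum of the negative parts of the eigenvalues of a symmetric matrix `A`. -/
noncomputable def negTrace {n : ℕ} (A : Matrix (Fin n) (Fin n) ℝ) : ℝ :=
  if h : A.IsHermitian then ∑ i, max (-h.eigenvalues i) 0 else 0

/-- The restricted Pucci maximal operator `P⁺_{λ,Λ|W}(X) = Λ·Tr(X_W⁺) − λ·Tr(X_W⁻)`. -/
noncomputable def pucciSupW {n : ℕ} (lam Lam : ℝ) (W : Submodule ℝ (EuclideanSpace ℝ (Fin n)))
    (X : Matrix (Fin n) (Fin n) ℝ) : ℝ :=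
  Lam * posTrace (restrictW W X) - lam * negTrace (restrictW W X)

/-- The restricted Pucci minimal operator `P⁻_{λ,Λ|W}(X) = λ·Tr(X_W⁺) − Λ·Tr(X_W⁻)`. -/
noncomputable def pucciInfW {n : ℕ} (lam Lam : ℝ) (W : Submodule ℝ (EuclideanSpace ℝ (Fin n)))
    (X : Matrix (Fin n) (Fin n) ℝ) : ℝ :=
  lam * posTrace (restrictW W X) - Lam * negTrace (restrictW W X)

/-- The eigenvalues of a symmetric matrix arranged in increasing order, `0`-based:
`sortedEig X 0 = e_1(X) ≤ … ≤ sortedEig X (n-1) = e_n(X)`. -/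
noncomputable def sortedEig {n : ℕ} (X : Matrix (Fin n) (Fin n) ℝ) : Fin n → ℝ :=
  if h : X.IsHermitian then h.eigenvalues ∘ (Tuple.sort h.eigenvalues) else 0

/-- The degenerate Pucci maximal operator of order `p`:
`P⁺_{λ,Λ|p}(X) = Σ_{i=n−p+1}^n (Λ·e_i(X)⁺ − λ·e_i(X)⁻)` (sum over the `p` largest
eigenvalues). -/
noncomputable def pucciSupP {n : ℕ} (lam Lam : ℝ) (p : ℕ)
    (X : Matrix (Fin n) (Fin n) ℝ) : ℝ :=
  ∑ i ∈ Finset.univ.filter (fun i : Fin n => n - p ≤ (i : ℕ)),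
    (Lam * max (sortedEig X i) 0 - lam * max (-(sortedEig X i)) 0)

/-- The degenerate Pucci minimal operator of order `p`:
`P⁻_{λ,Λ|p}(X) = Σ_{i=1}^p (λ·e_i(X)⁺ − Λ·e_i(X)⁻)` (sum over the `p` smallest
eigenvalues). -/
noncomputable def pucciInfP {n : ℕ} (lam Lam : ℝ) (p : ℕ)
    (X : Matrix (Fin n) (Fin n) ℝ) : ℝ :=
  ∑ i ∈ Finset.univ.filter (fun i : Fin n => (i : ℕ) < p),
    (lam * max (sortedEig X i) 0 - Lam * max (-(sortedEig X i)) 0)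

/-- The Hessian matrix `D²φ(x)` of a real valued function on `ℝⁿ`. -/
noncomputable def hessianMatrix {n : ℕ} (φ : EuclideanSpace ℝ (Fin n) → ℝ)
    (x : EuclideanSpace ℝ (Fin n)) : Matrix (Fin n) (Fin n) ℝ :=
  fun i j => iteratedFDeriv ℝ 2 φ x ![EuclideanSpace.single i 1, EuclideanSpace.single j 1]

/-- `u` is a viscosity subsolution of `G(u, Du, D²u) = f(x)` in `Ω`. -/
def IsViscositySubsolution {n : ℕ} (Ω : Set (EuclideanSpace ℝ (Fin n)))
    (G : ℝ → EuclideanSpace ℝ (Fin n) → Matrix (Fin n) (Fin n) ℝ → ℝ)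
    (u f : EuclideanSpace ℝ (Fin n) → ℝ) : Prop :=
  ∀ x₀ ∈ Ω, ∀ φ : EuclideanSpace ℝ (Fin n) → ℝ, ContDiff ℝ 2 φ →
    IsLocalMaxOn (fun x => u x - φ x) Ω x₀ →
    f x₀ ≤ G (u x₀) (gradient φ x₀) (hessianMatrix φ x₀)

/-- `v` is a viscosity supersolution of `G(v, Dv, D²v) = f(x)` in `Ω`. -/
def IsViscositySupersolution {n : ℕ} (Ω : Set (EuclideanSpace ℝ (Fin n)))
    (G : ℝ → EuclideanSpace ℝ (Fin n) → Matrix (Fin n) (Fin n) ℝ → ℝ)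
    (v f : EuclideanSpace ℝ (Fin n) → ℝ) : Prop :=
  ∀ x₀ ∈ Ω, ∀ φ : EuclideanSpace ℝ (Fin n) → ℝ, ContDiff ℝ 2 φ →
    IsLocalMinOn (fun x => v x - φ x) Ω x₀ →
    G (v x₀) (gradient φ x₀) (hessianMatrix φ x₀) ≤ f x₀

-- The `α`-Riesz kernel (for sets contained in `B_d`), with value `∞` at the origin:
-- `Φ_α(x) = |x|^{−α}` for `α > 0` and `Φ_0(x) = log(2d/|x|)`.
open Classical in
noncomputable def rieszKernel {n : ℕ} (α d : ℝ) (x : EuclideanSpace ℝ (Fin n)) : ℝ≥0∞ :=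
  if x = 0 then ⊤
  else ENNReal.ofReal (if α = 0 then Real.log (2 * d / ‖x‖) else ‖x‖ ^ (-α))

/-- The real valued `α`-Riesz kernel (for sets contained in `B_d`):
`Φ_α(x) = |x|^{−α}` for `α > 0` and `Φ_0(x) = log(2d/|x|)`. -/
noncomputable def rieszKernelR {n : ℕ} (α d : ℝ) (x : EuclideanSpace ℝ (Fin n)) : ℝ :=
  if α = 0 then Real.log (2 * d / ‖x‖) else ‖x‖ ^ (-α)

/-- A set `E ⊆ ℝⁿ` has zero `α`-Riesz capacity: every Borel probability measure supported
on a compact subset of `E` has infinite `α`-energy. -/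
def HasZeroRieszCapacity {n : ℕ} (α : ℝ) (E : Set (EuclideanSpace ℝ (Fin n))) : Prop :=
  ∀ K ⊆ E, IsCompact K → ∀ d > 0, K ⊆ ball (0 : EuclideanSpace ℝ (Fin n)) d →
    ∀ μ : Measure (EuclideanSpace ℝ (Fin n)), IsProbabilityMeasure μ → μ Kᶜ = 0 →
      ∫⁻ x, ∫⁻ y, rieszKernel α d (x - y) ∂μ ∂μ = ⊤


section AuxLemmas

open RealInnerProductSpace

theorem usc_exists_max' {X : Type*} [TopologicalSpace X] {s : Set X} (hs : IsCompact s)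
    (hne : s.Nonempty) {g : X → ℝ} (hg : UpperSemicontinuousOn g s) :
    ∃ x ∈ s, ∀ y ∈ s, g y ≤ g x := by
  by_contra hcon
  push_neg at hcon
  choose Y hY1 hY2 using hcon
  have key : ∀ (x : X) (hx : x ∈ s), ∃ U ∈ nhds x, ∀ y ∈ U ∩ s, g y < g (Y x hx) := by
    intro x hx
    have := hg x hx (g (Y x hx)) (hY2 x hx)
    rw [eventually_nhdsWithin_iff] at this
    obtain ⟨U, hU, hUx⟩ := this.exists_mem
    exact ⟨U, hU, fun y hy => hUx y hy.1 hy.2⟩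
  choose U hU hUlt using key
  obtain ⟨t, ht⟩ := hs.elim_nhds_subcover' U hU
  have htne : t.Nonempty := by
    by_contra h
    rw [Finset.not_nonempty_iff_eq_empty] at h
    obtain ⟨z, hz⟩ := hne
    have := ht hz
    simp [h] at this
  obtain ⟨x₀, hx₀t, hx₀max⟩ := t.exists_max_image (fun x => g (Y x.1 x.2)) htne
  set z := Y x₀.1 x₀.2 with hz
  have hzs : z ∈ s := hY1 x₀.1 x₀.2
  have := ht hzs
  simp only [Set.mem_iUnion] at this
  obtain ⟨x₁, hx₁t, hzU⟩ := this
  have h1 : g z < g (Y x₁.1 x₁.2) := hUlt x₁.1 x₁.2 z ⟨hzU, hzs⟩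
  have h2 : g (Y x₁.1 x₁.2) ≤ g z := hx₀max x₁ hx₁t
  linarith

theorem quad_fderiv {n : ℕ} (c' : ℝ) (z : EuclideanSpace ℝ (Fin n)) :
    HasFDerivAt (fun y : EuclideanSpace ℝ (Fin n) => c' * ‖y‖^2)
      ((2*c') • (innerSL ℝ z : EuclideanSpace ℝ (Fin n) →L[ℝ] ℝ)) z := by
  have h1 : HasFDerivAt (fun y : EuclideanSpace ℝ (Fin n) => ‖y‖^2)
      (2 • (innerSL ℝ z : EuclideanSpace ℝ (Fin n) →L[ℝ] ℝ)) z := by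
    simpa using (hasFDerivAt_id z).norm_sq
  have h2 := h1.const_mul c'
  refine h2.congr_fderiv ?_
  ext w
  simp [ContinuousLinearMap.smul_apply]
  ring

theorem quad_fderiv_fderiv {n : ℕ} (c' : ℝ) (x : EuclideanSpace ℝ (Fin n)) :
    fderiv ℝ (fderiv ℝ (fun y : EuclideanSpace ℝ (Fin n) => c' * ‖y‖^2)) x
      = ((2*c') • (innerSL ℝ : EuclideanSpace ℝ (Fin n) →L[ℝ]
          EuclideanSpace ℝ (Fin n) →L[ℝ] ℝ)) := by
  have h0 : (fderiv ℝ (fun y : EuclideanSpace ℝ (Fin n) => c' * ‖y‖^2))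
      = fun z => ((2*c') • (innerSL ℝ : EuclideanSpace ℝ (Fin n) →L[ℝ]
          EuclideanSpace ℝ (Fin n) →L[ℝ] ℝ)) z := by
    funext z
    rw [(quad_fderiv c' z).fderiv]
    simp
  rw [h0]
  exact ContinuousLinearMap.fderiv _

theorem quad_gradient {n : ℕ} (c' : ℝ) (z : EuclideanSpace ℝ (Fin n)) :
    gradient (fun y : EuclideanSpace ℝ (Fin n) => c' * ‖y‖^2) z = (2*c') • z := by
  have : HasGradientAt (fun y : EuclideanSpace ℝ (Fin n) => c' * ‖y‖^2) ((2*c') • z) z := by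
    rw [hasGradientAt_iff_hasFDerivAt]
    have hE : InnerProductSpace.toDual ℝ (EuclideanSpace ℝ (Fin n)) ((2*c') • z)
        = (2*c') • (innerSL ℝ z : EuclideanSpace ℝ (Fin n) →L[ℝ] ℝ) := by
      ext w
      simp [InnerProductSpace.toDual_apply_apply, inner_smul_left]
    rw [hE]
    exact quad_fderiv c' z
  exact this.gradient

theorem quad_hessian {n : ℕ} (c' : ℝ) (x : EuclideanSpace ℝ (Fin n)) :
    hessianMatrix (fun y : EuclideanSpace ℝ (Fin n) => c' * ‖y‖^2) x
      = (2*c') • (1 : Matrix (Fin n) (Fin n) ℝ) := by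
  funext i j
  unfold hessianMatrix
  rw [iteratedFDeriv_two_apply, quad_fderiv_fderiv]
  simp [Matrix.smul_apply, Matrix.one_apply, real_inner_comm,
    EuclideanSpace.inner_single_left, EuclideanSpace.single_apply]
  erw [innerSL_apply_apply]
  simp [EuclideanSpace.inner_single_left, EuclideanSpace.single_apply, eq_comm]
theorem sortedEig_smul_one {n : ℕ} (hn : 1 ≤ n) (t : ℝ) (i : Fin n) :
    sortedEig (t • (1 : Matrix (Fin n) (Fin n) ℝ)) i = t := by
  have hherm : (t • 1 : Matrix (Fin n) (Fin n) ℝ).IsHermitian := by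
    unfold Matrix.IsHermitian
    rw [Matrix.conjTranspose_smul, Matrix.conjTranspose_one]
    simp
  haveI : Nonempty (Fin n) := ⟨⟨0, hn⟩⟩
  have heig : ∀ j, hherm.eigenvalues j = t := by
    intro j
    have h2 := hherm.eigenvalues_mem_spectrum_real j
    have hs : spectrum ℝ ((t • 1 : Matrix (Fin n) (Fin n) ℝ)) = {t} := by
      rw [← Algebra.algebraMap_eq_smul_one]
      exact spectrum.scalar_eq t
    rw [hs] at h2
    exact h2
  unfold sortedEig
  rw [dif_pos hherm]
  simp [Function.comp, heig]

theorem card_filter_ge {n p : ℕ} (h : p ≤ n) :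
    (Finset.univ.filter (fun i : Fin n => n - p ≤ (i : ℕ))).card = p := by
  have : (Finset.univ.filter (fun i : Fin n => n - p ≤ (i : ℕ)))
      = (Finset.Ico (n-p) n).attachFin (fun m hm => (Finset.mem_Ico.mp hm).2) := by
    ext i
    simp [Finset.mem_attachFin, Finset.mem_Ico, i.is_lt]
  rw [this, Finset.card_attachFin, Nat.card_Ico]
  omega

theorem pucciSupP_smul_one {n : ℕ} (lam Lam : ℝ) (p : ℕ) (hp1 : 1 ≤ p) (hpn : p ≤ n)
    (t : ℝ) (ht : t ≤ 0) :
    pucciSupP lam Lam p (t • (1 : Matrix (Fin n) (Fin n) ℝ)) = p * (lam * t) := by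
  unfold pucciSupP
  have hterm : ∀ i : Fin n,
      Lam * max (sortedEig (t • (1 : Matrix (Fin n) (Fin n) ℝ)) i) 0
        - lam * max (-(sortedEig (t • (1 : Matrix (Fin n) (Fin n) ℝ)) i)) 0 = lam * t := by
    intro i
    rw [sortedEig_smul_one (le_trans hp1 hpn) t i, max_eq_right ht,
      max_eq_left (neg_nonneg.2 ht)]
    ring
  rw [Finset.sum_congr rfl (fun i _ => hterm i), Finset.sum_const, card_filter_ge hpn,
    nsmul_eq_mul]

end AuxLemmas

set_option maxHeartbeats 2000000 in
/-- maximum principle for the degenerate maximal equation with a positive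
coercive zero order term. -/
theorem maximum_principle_coercive (n : ℕ) (lam Lam : ℝ) (hlam : 0 < lam)
    (hLam : lam ≤ Lam) (p : ℕ) (hp1 : 1 ≤ p) (hpn : p ≤ n)
    (b c δ : ℝ) (hb : 0 ≤ b) (hc : 0 < c) (hδ : 0 < δ)
    (Ω : Set (EuclideanSpace ℝ (Fin n))) (hΩo : IsOpen Ω) (hΩconn : IsConnected Ω)
    (hΩsub : Ω ⊆ ball (0 : EuclideanSpace ℝ (Fin n)) δ)
    (u f : EuclideanSpace ℝ (Fin n) → ℝ) (hu : UpperSemicontinuousOn u Ω) (hf : ContinuousOn f Ω)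
    (hsub : IsViscositySubsolution Ω
      (fun r ξ X => pucciSupP lam Lam p X + b * ‖ξ‖ - c * r) u f)
    (M K : ℝ) (hK0 : 0 ≤ K) (hfK : ∀ x ∈ Ω, max (-f x) 0 ≤ K)
    (hM : ∀ x ∈ frontier Ω, ∀ ε > 0, ∀ᶠ y in nhdsWithin x Ω, max (u y) 0 ≤ M + ε) :
    ∀ ε > 0, ∀ x ∈ Ω, u x ≤ M +
      (δ ^ 2 + 2 / c * max (-(lam * p - b * δ)) 0 + ε) /
        (2 * max (lam * p - b * δ) 0 + c * ε) * K := by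
  intro ε hε x hx
  have hn : 1 ≤ n := le_trans hp1 hpn
  obtain ⟨q, hq⟩ : ∃ q : ℝ, q = lam * p - b * δ := ⟨_, rfl⟩
  rw [← hq]
  obtain ⟨D, hD⟩ : ∃ D : ℝ, D = 2 * max q 0 + c * ε := ⟨_, rfl⟩
  rw [← hD]
  have hmax0 : (0:ℝ) ≤ max q 0 := le_max_right q 0
  have hmaxneg0 : (0:ℝ) ≤ max (-q) 0 := le_max_right _ 0
  have hD0 : 0 < D := by rw [hD]; nlinarith
  obtain ⟨a, ha⟩ : ∃ a : ℝ, a = 2 / D := ⟨_, rfl⟩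
  have ha0 : 0 ≤ a := by rw [ha]; positivity
  obtain ⟨C, hC⟩ : ∃ C : ℝ, C = (δ ^ 2 + 2 / c * max (-q) 0 + ε) / D := ⟨_, rfl⟩
  rw [← hC]
  have hKa : 0 ≤ K * a := mul_nonneg hK0 ha0
  haveI : Nonempty (Fin n) := ⟨⟨0, hn⟩⟩
  have hfr : (frontier Ω).Nonempty := by
    by_contra h
    rw [Set.not_nonempty_iff_eq_empty] at h
    have hcl : IsClopen Ω := isClopen_iff_frontier_eq_empty.mpr h
    rcases isClopen_iff.mp hcl with h0 | h1
    · exact absurd h0 (Set.nonempty_iff_ne_empty.mp hΩconn.nonempty)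
    · have : (EuclideanSpace.single (⟨0, hn⟩ : Fin n) δ : EuclideanSpace ℝ (Fin n)) ∈ Ω := by
        rw [h1]; trivial
      have h2 := hΩsub this
      rw [mem_ball_zero_iff, EuclideanSpace.norm_single] at h2
      rw [Real.norm_eq_abs, abs_of_pos hδ] at h2
      exact lt_irrefl δ h2
  obtain ⟨z₀, hz₀fr⟩ := hfr
  haveI hz₀ne : (nhdsWithin z₀ Ω).NeBot :=
    mem_closure_iff_nhdsWithin_neBot.mp (frontier_subset_closure hz₀fr)
  have hM0 : 0 ≤ M := by
    by_contra h
    push_neg at h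
    obtain ⟨y, hy⟩ := (hM z₀ hz₀fr (-M/2) (by linarith)).exists
    have : (0:ℝ) ≤ max (u y) 0 := le_max_right _ _
    linarith
  classical
  obtain ⟨v, hv⟩ : ∃ v : EuclideanSpace ℝ (Fin n) → ℝ,
      v = fun y => u y + K * a / 2 * ‖y‖ ^ 2 := ⟨_, rfl⟩
  have hvy : ∀ y, v y = u y + K * a / 2 * ‖y‖ ^ 2 := fun y => by rw [hv]
  obtain ⟨M', hM'⟩ : ∃ M' : ℝ, M' = M + K * a / 2 * δ ^ 2 := ⟨_, rfl⟩
  obtain ⟨w, hwdef⟩ : ∃ w : EuclideanSpace ℝ (Fin n) → ℝ,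
      w = fun y => if y ∈ Ω then v y else M' := ⟨_, rfl⟩
  have hwin : ∀ y, y ∈ Ω → w y = v y := fun y hy => by rw [hwdef]; exact if_pos hy
  have hwout : ∀ y, y ∉ Ω → w y = M' := fun y hy => by rw [hwdef]; exact if_neg hy
  have hqbound : ∀ y ∈ Ω, K * a / 2 * ‖y‖ ^ 2 ≤ K * a / 2 * δ ^ 2 := by
    intro y hy
    have h1 : ‖y‖ < δ := mem_ball_zero_iff.mp (hΩsub hy)
    have h2 : ‖y‖ ^ 2 ≤ δ ^ 2 := by nlinarith [norm_nonneg y]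
    have h3 : 0 ≤ K * a / 2 := by positivity
    exact mul_le_mul_of_nonneg_left h2 h3
  have hcomp : IsCompact (closure Ω) :=
    (isCompact_closedBall (0 : EuclideanSpace ℝ (Fin n)) δ).of_isClosed_subset
      isClosed_closure
      (closure_minimal (hΩsub.trans ball_subset_closedBall) isClosed_closedBall)
  have hclne : (closure Ω).Nonempty := hΩconn.nonempty.closure
  have husc : UpperSemicontinuousOn w (closure Ω) := by
    intro z hz t ht
    by_cases hzΩ : z ∈ Ω
    · rw [hwin z hzΩ] at ht
      have hΩn : Ω ∈ nhds z := hΩo.mem_nhds hzΩ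
      rw [nhdsWithin_restrict' (closure Ω) hΩn,
        Set.inter_eq_self_of_subset_right subset_closure]
      obtain ⟨r, hr⟩ : ∃ r : ℝ, r = (t - v z) / 2 := ⟨_, rfl⟩
      have hr0 : 0 < r := by rw [hr]; linarith
      have hu' : ∀ᶠ y in nhdsWithin z Ω, u y < u z + r :=
        hu z hzΩ (u z + r) (by linarith)
      have hqt : Filter.Tendsto (fun y : EuclideanSpace ℝ (Fin n) => K * a / 2 * ‖y‖ ^ 2)
          (nhdsWithin z Ω) (nhds (K * a / 2 * ‖z‖ ^ 2)) :=
        ((continuous_const.mul ((continuous_norm).pow 2)).tendsto z).mono_left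
          nhdsWithin_le_nhds
      have hq' : ∀ᶠ y in nhdsWithin z Ω, K * a / 2 * ‖y‖ ^ 2 < K * a / 2 * ‖z‖ ^ 2 + r := by
        apply hqt.eventually_lt_const
        linarith [hr0]
      filter_upwards [hu', hq', self_mem_nhdsWithin] with y h1 h2 hyΩ
      rw [hwin y hyΩ, hvy y]
      have htz : u z + K * a / 2 * ‖z‖ ^ 2 < t := by rw [← hvy z]; exact ht
      have hrr : r = (t - (u z + K * a / 2 * ‖z‖ ^ 2)) / 2 := by rw [hr, hvy z]
      rw [hrr] at h1 h2
      linarith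
    · have hzfr : z ∈ frontier Ω := by
        rw [hΩo.frontier_eq]; exact ⟨hz, hzΩ⟩
      rw [hwout z hzΩ] at ht
      obtain ⟨ε₂, hε₂⟩ : ∃ e : ℝ, e = (t - M') / 2 := ⟨_, rfl⟩
      have hε₂0 : 0 < ε₂ := by rw [hε₂]; linarith
      have h1 := hM z hzfr ε₂ hε₂0
      have hclsplit : closure Ω = Ω ∪ (closure Ω \ Ω) := by
        ext y
        constructor
        · intro hy
          by_cases h : y ∈ Ω
          · exact Or.inl h
          · exact Or.inr ⟨hy, h⟩
        · rintro (h | h)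
          · exact subset_closure h
          · exact h.1
      rw [hclsplit, nhdsWithin_union, Filter.eventually_sup]
      constructor
      · filter_upwards [h1, self_mem_nhdsWithin] with y hy1 hyΩ
        rw [hwin y hyΩ, hvy y]
        have h2 : u y ≤ max (u y) 0 := le_max_left _ _
        have h3 := hqbound y hyΩ
        rw [hε₂] at hy1
        rw [hM'] at *
        linarith
      · filter_upwards [self_mem_nhdsWithin] with y hy
        rw [hwout y hy.2]
        linarith
  obtain ⟨x₀, hx₀cl, hx₀max⟩ := usc_exists_max' hcomp hclne husc
  have hux : u x ≤ v x := by
    have h0 : 0 ≤ K * a / 2 * ‖x‖ ^ 2 := by positivity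
    rw [hvy x]
    linarith
  have hmaxsub : max q 0 - q = max (-q) 0 := by
    rcases le_total q 0 with h | h
    · rw [max_eq_right h, max_eq_left (neg_nonneg.2 h)]; ring
    · rw [max_eq_left h, max_eq_right (neg_nonpos.2 h)]; ring
  have hDq : D - 2 * q = 2 * max (-q) 0 + c * ε := by
    rw [hD, ← hmaxsub]; ring
  have hid : (1 - a * q) / c + a / 2 * δ ^ 2 = C := by
    have e1 : (1 - a * q) / c + a / 2 * δ ^ 2 = (D - 2 * q) / (D * c) + δ ^ 2 / D := by
      rw [ha]
      field_simp
    rw [e1, hDq, hC]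
    field_simp
    ring
  by_cases hx₀Ω : x₀ ∈ Ω
  · have hmaxΩ : ∀ y ∈ Ω,
        (fun s => u s - (-(K * a) / 2 * ‖s‖ ^ 2)) y
          ≤ (fun s => u s - (-(K * a) / 2 * ‖s‖ ^ 2)) x₀ := by
      intro y hy
      have h1 : w y ≤ w x₀ := hx₀max y (subset_closure hy)
      rw [hwin y hy, hwin x₀ hx₀Ω, hvy y, hvy x₀] at h1
      simp only
      linarith
    have hIsMax : IsMaxOn (fun s => u s - (-(K * a) / 2 * ‖s‖ ^ 2)) Ω x₀ := by
      intro y hy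
      exact hmaxΩ y hy
    have hloc : IsLocalMaxOn (fun s => u s - (-(K * a) / 2 * ‖s‖ ^ 2)) Ω x₀ :=
      hIsMax.localize
    have hφC : ContDiff ℝ 2 (fun s : EuclideanSpace ℝ (Fin n) => -(K * a) / 2 * ‖s‖ ^ 2) :=
      contDiff_const.mul (contDiff_norm_sq ℝ)
    have hss := hsub x₀ hx₀Ω (fun s => -(K * a) / 2 * ‖s‖ ^ 2) hφC hloc
    simp only at hss
    have hgrad : gradient (fun s : EuclideanSpace ℝ (Fin n) => -(K * a) / 2 * ‖s‖ ^ 2) x₀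
        = (-(K * a)) • x₀ := by
      rw [quad_gradient (-(K * a) / 2) x₀]
      congr 1
      ring
    have hhess : hessianMatrix (fun s : EuclideanSpace ℝ (Fin n) => -(K * a) / 2 * ‖s‖ ^ 2) x₀
        = (-(K * a)) • (1 : Matrix (Fin n) (Fin n) ℝ) := by
      rw [quad_hessian (-(K * a) / 2) x₀]
      congr 1
      ring
    have hpucci : pucciSupP lam Lam p
        (hessianMatrix (fun s : EuclideanSpace ℝ (Fin n) => -(K * a) / 2 * ‖s‖ ^ 2) x₀)
        = p * (lam * (-(K * a))) := by
      rw [hhess]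
      exact pucciSupP_smul_one lam Lam p hp1 hpn _ (by linarith)
    have hnormx₀ : ‖x₀‖ < δ := mem_ball_zero_iff.mp (hΩsub hx₀Ω)
    have hgradnorm : ‖gradient (fun s : EuclideanSpace ℝ (Fin n)
        => -(K * a) / 2 * ‖s‖ ^ 2) x₀‖ = K * a * ‖x₀‖ := by
      rw [hgrad, norm_smul, Real.norm_eq_abs, abs_neg, abs_of_nonneg hKa]
    have hfneg : -f x₀ ≤ K := le_trans (le_max_left _ _) (hfK x₀ hx₀Ω)
    rw [hpucci, hgradnorm] at hss
    have hbK : b * (K * a * ‖x₀‖) ≤ b * (K * a * δ) := by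
      apply mul_le_mul_of_nonneg_left _ hb
      exact mul_le_mul_of_nonneg_left hnormx₀.le hKa
    have hcu : c * u x₀ ≤ K * (1 - a * q) := by
      have hKq : K * (1 - a * q) = K - (p : ℝ) * (lam * (K * a)) + b * (K * a * δ) := by
        rw [hq]; ring
      rw [hKq]
      linarith
    have hux₀ : u x₀ ≤ K * (1 - a * q) / c := by
      rw [le_div_iff₀ hc]
      linarith [hcu]
    have hvx₀ : v x ≤ v x₀ := by
      have h1 : w x ≤ w x₀ := hx₀max x (subset_closure hx)
      rwa [hwin x hx, hwin x₀ hx₀Ω] at h1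
    have hvx₀val : v x₀ ≤ K * (1 - a * q) / c + K * a / 2 * δ ^ 2 := by
      have h3 := hqbound x₀ hx₀Ω
      rw [hvy x₀]
      linarith
    have hfinal : K * (1 - a * q) / c + K * a / 2 * δ ^ 2 = C * K := by
      rw [← hid]
      field_simp
    calc u x ≤ v x := hux
      _ ≤ v x₀ := hvx₀
      _ ≤ K * (1 - a * q) / c + K * a / 2 * δ ^ 2 := hvx₀val
      _ = C * K := hfinal
      _ ≤ M + C * K := by linarith
  · have h1 : w x ≤ w x₀ := hx₀max x (subset_closure hx)
    rw [hwin x hx, hwout x₀ hx₀Ω, hM'] at h1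
    have hCa : K * a / 2 * δ ^ 2 ≤ C * K := by
      have h2 : δ ^ 2 / D ≤ C := by
        rw [hC]
        have h0 : 0 ≤ 2 / c * max (-q) 0 := by positivity
        gcongr
        linarith
      have h3 : K * a / 2 * δ ^ 2 = K * (δ ^ 2 / D) := by
        rw [ha]; field_simp
      rw [h3]
      calc K * (δ ^ 2 / D) ≤ K * C := mul_le_mul_of_nonneg_left h2 hK0
        _ = C * K := by ring
    have h4 : u x ≤ M + K * a / 2 * δ ^ 2 := le_trans hux h1
    linarith


end
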